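/- Let q be a positive definite quadratic form on ℝ^d. Then for every s ∈ ℂ with Re(s) > d/2 the family (q(n)^{−s})_{n∈ℤ^d∖{0}} is absolutely summable, and the function s ↦ Σ_{n∈ℤ^d∖{0}} q(n)^{−s} is holomorphic on the half plane {s ∈ ℂ : Re(s) > d/2}. -/

import Mathlib

open MeasureTheory Filter Finset Complex Metric
open scoped Topology

noncomputable section

/-- The vector of `ℝ^d` with integer coordinates `n ∈ ℤ^d`. -/
noncomputable def intVec {d : ℕ} (n : Fin d → ℤ) : EuclideanSpace ℝ (Fin d) :=
  (EuclideanSpace.equiv (Fin d) ℝ).symm fun i => (n i : ℝ)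

lemma intVec_apply {d : ℕ} (n : Fin d → ℤ) (i : Fin d) : intVec n i = (n i : ℝ) := rfl

lemma apply_le_norm {d : ℕ} (x : EuclideanSpace ℝ (Fin d)) (i : Fin d) : |x i| ≤ ‖x‖ := by
  rw [EuclideanSpace.norm_eq]
  have h : ‖x i‖^2 ≤ ∑ j, ‖x j‖^2 :=
    Finset.single_le_sum (f := fun j => ‖x j‖^2) (fun j _ => sq_nonneg _) (mem_univ i)
  calc |x i| = Real.sqrt (‖x i‖^2) := by rw [Real.sqrt_sq_eq_abs, Real.norm_eq_abs, _root_.abs_abs]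
  _ ≤ _ := Real.sqrt_le_sqrt h

lemma one_le_norm_intVec {d : ℕ} {n : Fin d → ℤ} (hn : n ≠ 0) : 1 ≤ ‖intVec n‖ := by
  obtain ⟨i, hi⟩ : ∃ i, n i ≠ 0 := by
    by_contra h
    push_neg at h
    exact hn (funext h)
  have h1 : (1:ℝ) ≤ |(n i : ℝ)| := by
    have := Int.one_le_abs hi
    calc (1:ℝ) = ((1:ℤ):ℝ) := by norm_num
    _ ≤ ((|n i|:ℤ):ℝ) := by exact_mod_cast this
    _ = |(n i:ℝ)| := by push_cast; rfl
  calc (1:ℝ) ≤ |(n i:ℝ)| := h1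
  _ = |intVec n i| := by rw [intVec_apply]
  _ ≤ ‖intVec n‖ := apply_le_norm _ i

lemma summable_prod_int {d : ℕ} {g : ℤ → ℝ} (hg0 : ∀ j, 0 ≤ g j) (hg : Summable g) :
    Summable fun n : Fin d → ℤ => ∏ i, g (n i) := by
  induction d with
  | zero => exact Summable.of_finite
  | succ d ih =>
    have h2 : Summable fun p : ℤ × (Fin d → ℤ) => g p.1 * ∏ i, g (p.2 i) := by
      apply Summable.mul_of_nonneg hg ih hg0
      exact fun n => Finset.prod_nonneg fun i _ => hg0 _
    rw [← (Fin.consEquiv (fun _ => ℤ)).summable_iff]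
    refine h2.congr fun p => ?_
    simp [Fin.consEquiv, Fin.prod_univ_succ]

lemma summable_g {p : ℝ} (hp : 1 < p) :
    Summable fun j : ℤ => ((1:ℝ) + |(j:ℝ)|)^(-p) := by
  have hnat : Summable fun n : ℕ => ((1:ℝ) + n)^(-p) := by
    have h0 : Summable fun n : ℕ => ((n:ℝ))^(-p) :=
      Real.summable_nat_rpow.mpr (by linarith)
    have h1 : Summable fun n : ℕ => (((n+1 : ℕ)):ℝ)^(-p) := (summable_nat_add_iff 1).mpr h0
    exact h1.congr fun n => by push_cast; ring_nf
  refine Summable.of_nat_of_neg (hnat.congr fun n => ?_) (hnat.congr fun n => ?_) <;>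
    push_cast <;> simp [abs_of_nonneg]

lemma key_summable {d : ℕ} (hd : 0 < d) {q : EuclideanSpace ℝ (Fin d) → ℝ} {c : ℝ} (hc : 0 < c)
    (hlow : ∀ x, c * ‖x‖^2 ≤ q x) {a : ℝ} (ha : (d:ℝ)/2 < a) :
    Summable fun n : {n : Fin d → ℤ // n ≠ 0} => (q (intVec n.1)) ^ (-a) := by
  have hd' : (0:ℝ) < d := by exact_mod_cast hd
  have ha0 : 0 < a := lt_trans (by positivity) ha
  set p : ℝ := 2 * a / d with hp_def
  have hp1 : 1 < p := by rw [hp_def, lt_div_iff₀ hd']; linarith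
  have hp0 : 0 < p := lt_trans one_pos hp1
  set g : ℤ → ℝ := fun j => ((1:ℝ) + |(j:ℝ)|) ^ (-p) with hg_def
  have hg0 : ∀ j, 0 ≤ g j := fun j => Real.rpow_nonneg (by positivity) _
  have hgsum : Summable g := summable_g hp1
  have hbig : Summable fun n : Fin d → ℤ => ∏ i, g (n i) := summable_prod_int hg0 hgsum
  have hsub := hbig.subtype {n : Fin d → ℤ | n ≠ 0}
  refine Summable.of_nonneg_of_le (fun n => Real.rpow_nonneg ?_ _) ?_
    ((hsub.mul_left (c ^ (-a) * 2 ^ (2*a))))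
  · exact le_trans (by positivity) (hlow _)
  · rintro ⟨n, hn⟩
    set x := intVec n with hx_def
    set R := ‖x‖ with hR_def
    have hR1 : 1 ≤ R := one_le_norm_intVec hn
    have hR0 : 0 < R := lt_of_lt_of_le one_pos hR1
    have hqx : c * R^2 ≤ q x := hlow x
    have hqpos : 0 < q x := lt_of_lt_of_le (by positivity) hqx
    have step2 : q x ^ (-a) ≤ (c * R^2) ^ (-a) :=
      Real.rpow_le_rpow_of_nonpos (by positivity) hqx (neg_nonpos.mpr ha0.le)
    have step3 : (c * R^2) ^ (-a) = c ^ (-a) * R ^ (-(2*a)) := by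
      rw [Real.mul_rpow hc.le (sq_nonneg R)]
      congr 1
      rw [← Real.rpow_natCast R 2, ← Real.rpow_mul hR0.le]
      norm_num
    set P := ∏ i, ((1:ℝ) + |(n i:ℝ)|) with hP_def
    have hP1 : (1:ℝ) ≤ P := by
      rw [hP_def]
      calc (1:ℝ) = ∏ _i : Fin d, (1:ℝ) := by simp
      _ ≤ _ := Finset.prod_le_prod (fun i _ => by norm_num)
        (fun i _ => le_add_of_nonneg_right (abs_nonneg _))
    have hP0 : 0 < P := lt_of_lt_of_le one_pos hP1
    have hPle : P ≤ (2*R)^d := by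
      rw [hP_def]
      calc ∏ i, ((1:ℝ) + |(n i:ℝ)|) ≤ ∏ _i : Fin d, (2*R) := by
            refine Finset.prod_le_prod (fun i _ => by positivity) (fun i _ => ?_)
            have h2 : |(n i:ℝ)| = |x i| := by rw [hx_def, intVec_apply]
            have := apply_le_norm x i
            rw [h2]; linarith
      _ = (2*R)^d := by rw [Finset.prod_const, Finset.card_univ, Fintype.card_fin]
    have hPp : P ^ p ≤ 2^(2*a) * R^(2*a) := by
      calc P ^ p ≤ ((2*R)^d) ^ p := Real.rpow_le_rpow hP0.le hPle hp0.le
      _ = (2*R) ^ (2*a) := by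
          rw [← Real.rpow_natCast (2*R) d, ← Real.rpow_mul (by positivity)]
          congr 1
          rw [hp_def]
          field_simp
      _ = 2^(2*a) * R^(2*a) := Real.mul_rpow (by norm_num) hR0.le
    have step4 : R ^ (-(2*a)) ≤ 2^(2*a) * P ^ (-p) := by
      rw [Real.rpow_neg hR0.le, Real.rpow_neg hP0.le]
      have h1 : (R ^ (2*a))⁻¹ ≤ (P ^ p / 2^(2*a))⁻¹ := by
        apply inv_anti₀
        · positivity
        · rw [div_le_iff₀ (by positivity)]
          calc P ^ p ≤ 2^(2*a) * R^(2*a) := hPp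
          _ = R^(2*a) * 2^(2*a) := by ring
      calc (R ^ (2*a))⁻¹ ≤ (P ^ p / 2^(2*a))⁻¹ := h1
      _ = 2^(2*a) * (P^p)⁻¹ := by rw [inv_div]; ring
    have hprod_eq : P ^ (-p) = ∏ i, g (n i) := by
      rw [hg_def, hP_def, Real.finset_prod_rpow _ _ (fun i _ => by positivity)]
    calc q x ^ (-a) ≤ (c * R^2) ^ (-a) := step2
    _ = c ^ (-a) * R ^ (-(2*a)) := step3
    _ ≤ c ^ (-a) * (2^(2*a) * P ^ (-p)) := by
        apply mul_le_mul_of_nonneg_left step4 (Real.rpow_nonneg hc.le _)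
    _ = c ^ (-a) * 2 ^ (2*a) * ∏ i, g (n i) := by rw [hprod_eq]; ring

/-- **The Epstein-type series of a positive definite quadratic form `q` on `ℝ^d` converges
absolutely and defines a holomorphic function on the half plane `Re(s) > d/2`.** -/
theorem epstein_series_holomorphic {d : ℕ} (hd : 0 < d)
    (A : Fin d → Fin d → ℝ)
    (q : EuclideanSpace ℝ (Fin d) → ℝ)
    (hq : ∀ x : EuclideanSpace ℝ (Fin d), q x = ∑ i, ∑ j, A i j * x i * x j)
    (hpos : ∀ x : EuclideanSpace ℝ (Fin d), x ≠ 0 → 0 < q x) :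
    (∀ s : ℂ, (d : ℝ) / 2 < s.re →
      Summable (fun n : {n : Fin d → ℤ // n ≠ 0} =>
        ‖((q (intVec n.1) : ℝ) : ℂ) ^ (-s)‖)) ∧
    DifferentiableOn ℂ
      (fun s : ℂ => ∑' n : {n : Fin d → ℤ // n ≠ 0}, ((q (intVec n.1) : ℝ) : ℂ) ^ (-s))
      {s : ℂ | (d : ℝ) / 2 < s.re} := by
  -- continuity of `q`
  have hcoord : ∀ i : Fin d, Continuous fun x : EuclideanSpace ℝ (Fin d) => x i :=
    fun i => (EuclideanSpace.proj (𝕜 := ℝ) i).continuous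
  have hqc : Continuous q := by
    have h : q = fun x : EuclideanSpace ℝ (Fin d) => ∑ i, ∑ j, A i j * x i * x j := funext hq
    rw [h]
    exact continuous_finset_sum _ fun i _ => continuous_finset_sum _ fun j _ =>
      (continuous_const.mul (hcoord i)).mul (hcoord j)
  -- homogeneity of `q`
  have hom : ∀ (t : ℝ) (x : EuclideanSpace ℝ (Fin d)), q (t • x) = t^2 * q x := by
    intro t x
    rw [hq, hq, Finset.mul_sum]
    refine Finset.sum_congr rfl fun i _ => ?_
    rw [Finset.mul_sum]
    refine Finset.sum_congr rfl fun j _ => ?_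
    have h1 : (t • x) i = t * x i := rfl
    have h2 : (t • x) j = t * x j := rfl
    rw [h1, h2]; ring
  -- the minimum of `q` on the unit sphere
  obtain ⟨x₀, hx₀mem, hx₀min⟩ :=
    (isCompact_sphere (0 : EuclideanSpace ℝ (Fin d)) 1).exists_isMinOn
      ⟨EuclideanSpace.single ⟨0, hd⟩ (1:ℝ), by
        simp [mem_sphere_zero_iff_norm, EuclideanSpace.norm_single]⟩
      hqc.continuousOn
  set c := q x₀ with hc_def
  have hx₀ : x₀ ≠ 0 := by
    intro h
    have := mem_sphere_zero_iff_norm.mp hx₀mem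
    rw [h, norm_zero] at this; norm_num at this
  have hc : 0 < c := hpos x₀ hx₀
  -- the quadratic lower bound
  have hlow : ∀ x : EuclideanSpace ℝ (Fin d), c * ‖x‖^2 ≤ q x := by
    intro x
    rcases eq_or_ne x 0 with rfl | hx
    · simp [hq]
    · have hnx : (0:ℝ) < ‖x‖ := norm_pos_iff.mpr hx
      set u := ‖x‖⁻¹ • x with hu_def
      have hu : ‖u‖ = 1 := by
        rw [hu_def, norm_smul, norm_inv, norm_norm, inv_mul_cancel₀ hnx.ne']
      have hmin : c ≤ q u := hx₀min (mem_sphere_zero_iff_norm.mpr hu)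
      have hxu : (‖x‖ : ℝ) • u = x := by
        rw [hu_def, smul_smul, mul_inv_cancel₀ hnx.ne', one_smul]
      calc c * ‖x‖^2 ≤ q u * ‖x‖^2 := by nlinarith [sq_nonneg ‖x‖]
      _ = ‖x‖^2 * q u := by ring
      _ = q ((‖x‖:ℝ) • u) := (hom _ _).symm
      _ = q x := by rw [hxu]
  -- positivity of `q` at nonzero lattice points
  have hqn : ∀ n : {n : Fin d → ℤ // n ≠ 0}, 0 < q (intVec n.1) := by
    rintro ⟨n, hn⟩
    have hR1 : 1 ≤ ‖intVec n‖ := one_le_norm_intVec hn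
    calc (0:ℝ) < c * ‖intVec n‖^2 := by positivity
    _ ≤ q (intVec n) := hlow _
  constructor
  · -- summability
    intro s hs
    refine (key_summable hd hc hlow hs).congr fun n => ?_
    rw [Complex.norm_cpow_eq_rpow_re_of_pos (hqn n), Complex.neg_re]
  · -- holomorphy
    intro s₀ hs₀
    have hs₀' : (d:ℝ)/2 < s₀.re := hs₀
    set a : ℝ := ((d:ℝ)/2 + s₀.re)/2 with ha_def
    set b : ℝ := s₀.re + 1 with hb_def
    have ha : (d:ℝ)/2 < a := by rw [ha_def]; linarith
    have has₀ : a < s₀.re := by rw [ha_def]; linarith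
    have hbs₀ : s₀.re < b := by rw [hb_def]; linarith
    set V : Set ℂ := {s : ℂ | a < s.re} ∩ {s : ℂ | s.re < b} with hV_def
    have hVopen : IsOpen V :=
      (isOpen_lt continuous_const Complex.continuous_re).inter
        (isOpen_lt Complex.continuous_re continuous_const)
    have hs₀V : s₀ ∈ V := ⟨has₀, hbs₀⟩
    set m : ℝ := min c 1 with hm_def
    have hm0 : 0 < m := lt_min hc one_pos
    have hm1 : m ≤ 1 := min_le_right _ _
    have hu : Summable fun n : {n : Fin d → ℤ // n ≠ 0} =>
        m^(a-b) * (q (intVec n.1)) ^ (-a) := (key_summable hd hc hlow ha).mul_left _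
    have hf : ∀ n : {n : Fin d → ℤ // n ≠ 0},
        DifferentiableOn ℂ (fun s : ℂ => ((q (intVec n.1) : ℝ) : ℂ) ^ (-s)) V := by
      intro n
      have hne : ((q (intVec n.1) : ℝ) : ℂ) ≠ 0 := by
        exact_mod_cast (hqn n).ne'
      intro s _
      exact ((differentiableAt_id.neg).const_cpow (Or.inl hne)).differentiableWithinAt
    have hbound : ∀ (n : {n : Fin d → ℤ // n ≠ 0}) (s : ℂ), s ∈ V →
        ‖((q (intVec n.1) : ℝ) : ℂ) ^ (-s)‖ ≤ m^(a-b) * (q (intVec n.1)) ^ (-a) := by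
      rintro n s ⟨h1, h2⟩
      have hQ : 0 < q (intVec n.1) := hqn n
      have hmQ : m ≤ q (intVec n.1) := by
        have hR1 : 1 ≤ ‖intVec n.1‖ := one_le_norm_intVec n.2
        have hsq : 1 ≤ ‖intVec n.1‖^2 := by nlinarith [hR1]
        have : c ≤ c * ‖intVec n.1‖^2 := le_mul_of_one_le_right hc.le hsq
        calc m ≤ c := min_le_left _ _
        _ ≤ c * ‖intVec n.1‖^2 := this
        _ ≤ q (intVec n.1) := hlow _
      rw [Complex.norm_cpow_eq_rpow_re_of_pos hQ, Complex.neg_re]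
      have hsplit : q (intVec n.1) ^ (-s.re)
          = q (intVec n.1) ^ (a - s.re) * q (intVec n.1) ^ (-a) := by
        rw [← Real.rpow_add hQ]; ring_nf
      rw [hsplit]
      apply mul_le_mul_of_nonneg_right _ (Real.rpow_nonneg hQ.le _)
      calc q (intVec n.1) ^ (a - s.re) ≤ m ^ (a - s.re) :=
            Real.rpow_le_rpow_of_nonpos hm0 hmQ (by simp only [Set.mem_setOf_eq] at h1; linarith)
      _ ≤ m ^ (a - b) :=
            Real.rpow_le_rpow_of_exponent_ge hm0 hm1
              (by simp only [Set.mem_setOf_eq] at h2; linarith)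
    have hdiff := differentiableOn_tsum_of_summable_norm hu hf hVopen hbound
    exact (hdiff.differentiableAt (hVopen.mem_nhds hs₀V)).differentiableWithinAt
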